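/- Let f ∈ C²(R^d) with ‖∇f‖_∞ + ‖∇²f‖_∞ < ∞. Then for all x, y ∈ R^d, |L^α f(x) - L^α f(y)| ≤ (2 d_α ‖∇²f‖_∞ / (α(2-α)(α-1))) · |x-y|^{2-α}. -/

import Mathlib

noncomputable section

open MeasureTheory Real Set Metric Filter
open scoped ENNReal NNReal BigOperators Topology

/-- `Ed d` is the Euclidean space `ℝ^d`. -/
abbrev Ed (d : ℕ) := EuclideanSpace ℝ (Fin d)

/-- The normalizing constant `d_α = α / (Γ(1-α) cos(πα/2))`. -/
def dCoef (α : ℝ) : ℝ := α / (Real.Gamma (1 - α) * Real.cos (π * α / 2))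

/-- The nonlocal operator
`L^α f(x) = d_α ∫_0^∞ ∫_{S^{d-1}} (f(x+rθ) - f(x) - r⟨θ,∇f(x)⟩) ν(dθ) r^{-1-α} dr`. -/
def Lop (d : ℕ) (α dα : ℝ) (ν : Measure (Ed d)) (f : Ed d → ℝ) (x : Ed d) : ℝ :=
  dα * ∫ r in Ioi (0:ℝ),
    (∫ θ, (f (x + r • θ) - f x - r * (inner ℝ θ (gradient f x) : ℝ)) ∂ν) * r ^ (-1 - α)

/-- The Ornstein–Uhlenbeck type generator `A^α f(x) = L^α f(x) - (1/α)⟨x, ∇f(x)⟩`. -/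
def Aop (d : ℕ) (α dα : ℝ) (ν : Measure (Ed d)) (f : Ed d → ℝ) (x : Ed d) : ℝ :=
  Lop d α dα ν f x - (1 / α) * (inner ℝ x (gradient f x) : ℝ)

/-- Fourier transform (characteristic function) of a measure on `ℝ^d`. -/
def charFunM {d : ℕ} (μ : Measure (Ed d)) (z : Ed d) : ℂ :=
  ∫ x, Complex.exp (((inner ℝ x z : ℝ) : ℂ) * Complex.I) ∂μ

/-- The characteristic exponent
`ψ(z) = ∫_{S^{d-1}} |⟨z,θ⟩|^α (1 - i tan(πα/2) sgn⟨z,θ⟩) ν(dθ)`. -/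
def psiExp (d : ℕ) (α : ℝ) (ν : Measure (Ed d)) (z : Ed d) : ℂ :=
  ∫ θ, ((|(inner ℝ z θ : ℝ)| ^ α : ℝ) : ℂ) *
      (1 - Complex.I * ((Real.tan (π * α / 2) : ℝ) : ℂ) * ((Real.sign (inner ℝ z θ : ℝ) : ℝ) : ℂ)) ∂ν



variable {d : ℕ}

lemma inner_grad (f : Ed d → ℝ) (z v : Ed d) :
    (inner ℝ v (gradient f z) : ℝ) = fderiv ℝ f z v := by
  rw [real_inner_comm]
  exact InnerProductSpace.toDual_symm_apply

lemma grad_diff {f : Ed d → ℝ} (hf : ContDiff ℝ 2 f) : Differentiable ℝ (gradient f) := by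
  have h1 : ContDiff ℝ 1 (fderiv ℝ f) := hf.fderiv_right (by norm_num)
  have h2 : Differentiable ℝ
      (fun w : StrongDual ℝ (Ed d) => (InnerProductSpace.toDual ℝ (Ed d)).symm w) :=
    (InnerProductSpace.toDual ℝ (Ed d)).symm.toContinuousLinearEquiv.toContinuousLinearMap.differentiable
  exact h2.comp (h1.differentiable one_ne_zero)

lemma hasDerivAt_line {f : Ed d → ℝ} (hf : ContDiff ℝ 2 f) (x θ : Ed d) (t : ℝ) :
    HasDerivAt (fun s : ℝ => f (x + s • θ)) ((inner ℝ θ (gradient f (x + t • θ)) : ℝ)) t := by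
  have hcurve : HasDerivAt (fun s : ℝ => x + s • θ) θ t := by
    simpa using ((hasDerivAt_id t).smul_const θ).const_add x
  have hfd : DifferentiableAt ℝ f (x + t • θ) := (hf.differentiable (by norm_num)).differentiableAt
  have h := hfd.hasFDerivAt.comp_hasDerivAt t hcurve
  rwa [← inner_grad f] at h
lemma grad_lip {f : Ed d → ℝ} (hf : ContDiff ℝ 2 f) {M₂ : ℝ}
    (hM₂ : ∀ x : Ed d, ‖fderiv ℝ (gradient f) x‖ ≤ M₂) (a b : Ed d) :
    ‖gradient f a - gradient f b‖ ≤ M₂ * ‖a - b‖ :=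
  Convex.norm_image_sub_le_of_norm_fderiv_le (fun z _ => (grad_diff hf z))
    (fun z _ => hM₂ z) convex_univ (mem_univ b) (mem_univ a)

lemma f_lip {f : Ed d → ℝ} (hf : ContDiff ℝ 2 f) {M₁ : ℝ}
    (hM₁ : ∀ x : Ed d, ‖gradient f x‖ ≤ M₁) (a b : Ed d) :
    ‖f a - f b‖ ≤ M₁ * ‖a - b‖ := by
  refine Convex.norm_image_sub_le_of_norm_fderiv_le
    (fun z _ => (hf.differentiable (by norm_num)).differentiableAt)
    (fun z _ => ?_) convex_univ (mem_univ b) (mem_univ a)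
  have : ‖gradient f z‖ = ‖fderiv ℝ f z‖ :=
    (InnerProductSpace.toDual ℝ (Ed d)).symm.norm_map (fderiv ℝ f z)
  rw [← this]; exact hM₁ z

lemma taylor_bound {f : Ed d → ℝ} (hf : ContDiff ℝ 2 f) {M₂ : ℝ}
    (hM₂ : ∀ x : Ed d, ‖fderiv ℝ (gradient f) x‖ ≤ M₂)
    (x θ : Ed d) (hθ : ‖θ‖ = 1) {r : ℝ} (hr : 0 ≤ r) :
    |f (x + r • θ) - f x - r * (inner ℝ θ (gradient f x) : ℝ)| ≤ M₂ * r ^ 2 / 2 := by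
  set c : ℝ := (inner ℝ θ (gradient f x) : ℝ) with hc
  set F' : ℝ → ℝ := fun t => (inner ℝ θ (gradient f (x + t • θ)) : ℝ) - c with hF'
  have hderiv : ∀ t ∈ uIcc (0:ℝ) r, HasDerivAt (fun s => f (x + s • θ) - s * c) (F' t) t :=
    fun t _ => (hasDerivAt_line hf x θ t).sub (hasDerivAt_mul_const c)
  have hcurve : Continuous fun t : ℝ => x + t • θ :=
    continuous_const.add (continuous_id.smul continuous_const)
  have hcont : Continuous F' :=
    (continuous_const.inner ((grad_diff hf).continuous.comp hcurve)).sub continuous_const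
  have hFTC := intervalIntegral.integral_eq_sub_of_hasDerivAt hderiv (hcont.intervalIntegrable 0 r)
  have key : f (x + r • θ) - f x - r * c = ∫ t in (0:ℝ)..r, F' t := by
    rw [hFTC]; simp only [zero_smul, add_zero, zero_mul, sub_zero]; ring
  rw [key]
  have hbd : ∀ t ∈ Icc (0:ℝ) r, |F' t| ≤ M₂ * t := by
    intro t ht
    have hFt : F' t = (inner ℝ θ (gradient f (x + t • θ) - gradient f x) : ℝ) := by
      rw [hF', hc, inner_sub_right]
    rw [hFt]
    calc |(inner ℝ θ (gradient f (x + t • θ) - gradient f x) : ℝ)|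
        ≤ ‖θ‖ * ‖gradient f (x + t • θ) - gradient f x‖ := abs_real_inner_le_norm _ _
      _ ≤ 1 * (M₂ * ‖(x + t • θ) - x‖) := by
          rw [hθ, one_mul, one_mul]; exact grad_lip hf hM₂ _ _
      _ = M₂ * t := by
          rw [one_mul, add_sub_cancel_left, norm_smul]
          simp [abs_of_nonneg ht.1, hθ]
  calc |∫ t in (0:ℝ)..r, F' t| ≤ ∫ t in (0:ℝ)..r, |F' t| := by
        simpa using intervalIntegral.norm_integral_le_integral_norm (f := F') hr
    _ ≤ ∫ t in (0:ℝ)..r, M₂ * t :=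
        intervalIntegral.integral_mono_on hr (hcont.abs.intervalIntegrable 0 r)
          ((continuous_const.mul continuous_id).intervalIntegrable 0 r) hbd
    _ = M₂ * r ^ 2 / 2 := by
        rw [intervalIntegral.integral_const_mul, integral_id]; ring

lemma tail_bound {f : Ed d → ℝ} (hf : ContDiff ℝ 2 f) {M₂ : ℝ}
    (hM₂ : ∀ x : Ed d, ‖fderiv ℝ (gradient f) x‖ ≤ M₂)
    (x y θ : Ed d) (hθ : ‖θ‖ = 1) {r : ℝ} (hr : ‖x - y‖ ≤ r) :
    |(f (x + r • θ) - f x - r * (inner ℝ θ (gradient f x) : ℝ))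
      - (f (y + r • θ) - f y - r * (inner ℝ θ (gradient f y) : ℝ))| ≤
      M₂ * (2 * ‖x - y‖ * r - ‖x - y‖ ^ 2) := by
  set h := ‖x - y‖ with hh
  have h0 : 0 ≤ h := norm_nonneg _
  set cx : ℝ := (inner ℝ θ (gradient f x) : ℝ) with hcx
  set cy : ℝ := (inner ℝ θ (gradient f y) : ℝ) with hcy
  set F : ℝ → ℝ := fun t => f (x + t • θ) - f (y + t • θ) - t * (cx - cy) with hF
  have hF' : ∀ t : ℝ, HasDerivAt F
      ((inner ℝ θ (gradient f (x + t • θ)) : ℝ) - (inner ℝ θ (gradient f (y + t • θ)) : ℝ)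
        - (cx - cy)) t :=
    fun t => ((hasDerivAt_line hf x θ t).sub (hasDerivAt_line hf y θ t)).sub
      (hasDerivAt_mul_const (cx - cy))
  -- bound on the derivative for all t
  have hFbd : ∀ t : ℝ, |(inner ℝ θ (gradient f (x + t • θ)) : ℝ)
      - (inner ℝ θ (gradient f (y + t • θ)) : ℝ) - (cx - cy)| ≤ 2 * M₂ * h := by
    intro t
    have e1 : (inner ℝ θ (gradient f (x + t • θ)) : ℝ) - (inner ℝ θ (gradient f (y + t • θ)) : ℝ)
        - (cx - cy) =
        (inner ℝ θ ((gradient f (x + t • θ) - gradient f (y + t • θ))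
          - (gradient f x - gradient f y)) : ℝ) := by
      rw [hcx, hcy]; simp only [inner_sub_right]; try ring
    rw [e1]
    have e2 : (x + t • θ) - (y + t • θ) = x - y := by abel
    calc |(inner ℝ θ ((gradient f (x + t • θ) - gradient f (y + t • θ))
          - (gradient f x - gradient f y)) : ℝ)|
        ≤ ‖θ‖ * ‖(gradient f (x + t • θ) - gradient f (y + t • θ))
          - (gradient f x - gradient f y)‖ := abs_real_inner_le_norm _ _
      _ ≤ 1 * (‖gradient f (x + t • θ) - gradient f (y + t • θ)‖
          + ‖gradient f x - gradient f y‖) := by rw [hθ, one_mul, one_mul]; exact norm_sub_le _ _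
      _ ≤ 1 * (M₂ * ‖(x + t • θ) - (y + t • θ)‖ + M₂ * ‖x - y‖) := by
          rw [one_mul, one_mul]
          exact add_le_add (grad_lip hf hM₂ _ _) (grad_lip hf hM₂ _ _)
      _ = 2 * M₂ * h := by rw [e2, ← hh]; ring
  -- the middle segment [h, r]
  have hmid : |F r - F h| ≤ 2 * M₂ * h * (r - h) := by
    have := norm_image_sub_le_of_norm_deriv_le_segment'
      (f := F) (f' := fun t => (inner ℝ θ (gradient f (x + t • θ)) : ℝ)
        - (inner ℝ θ (gradient f (y + t • θ)) : ℝ) - (cx - cy))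
      (C := 2 * M₂ * h) (a := h) (b := r)
      (fun t _ => (hF' t).hasDerivWithinAt) (fun t _ => hFbd t) r (right_mem_Icc.2 hr)
    simpa using this
  -- the initial segment [0, h]
  have hM₂0 : 0 ≤ M₂ := le_trans (norm_nonneg _) (hM₂ x)
  have hinit : |F h - F 0| ≤ M₂ * h ^ 2 := by
    have e3 : F h - F 0 = (f (x + h • θ) - f x - h * cx) - (f (y + h • θ) - f y - h * cy) := by
      simp only [hF, zero_smul, add_zero, zero_mul, sub_zero]; ring
    rw [e3]
    calc |(f (x + h • θ) - f x - h * cx) - (f (y + h • θ) - f y - h * cy)|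
        ≤ |f (x + h • θ) - f x - h * cx| + |f (y + h • θ) - f y - h * cy| := abs_sub _ _
      _ ≤ M₂ * h ^ 2 / 2 + M₂ * h ^ 2 / 2 :=
          add_le_add (taylor_bound hf hM₂ x θ hθ h0) (taylor_bound hf hM₂ y θ hθ h0)
      _ = M₂ * h ^ 2 := by ring
  have efinal : (f (x + r • θ) - f x - r * cx) - (f (y + r • θ) - f y - r * cy) = F r - F 0 := by
    simp only [hF, zero_smul, add_zero, zero_mul, sub_zero]; ring
  rw [efinal]
  calc |F r - F 0| ≤ |F r - F h| + |F h - F 0| := by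
        have := abs_sub_le (F r) (F h) (F 0); linarith [abs_sub_le (F r) (F h) (F 0)]
    _ ≤ 2 * M₂ * h * (r - h) + M₂ * h ^ 2 := add_le_add hmid hinit
    _ = M₂ * (2 * h * r - h ^ 2) := by ring

lemma lin_bound {f : Ed d → ℝ} (hf : ContDiff ℝ 2 f) {M₁ : ℝ}
    (hM₁ : ∀ x : Ed d, ‖gradient f x‖ ≤ M₁) (x θ : Ed d) (hθ : ‖θ‖ = 1) (r : ℝ) :
    |f (x + r • θ) - f x - r * (inner ℝ θ (gradient f x) : ℝ)| ≤ 2 * M₁ * |r| := by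
  have h1 : |f (x + r • θ) - f x| ≤ M₁ * |r| := by
    have := f_lip hf hM₁ (x + r • θ) x
    rwa [add_sub_cancel_left, norm_smul, Real.norm_eq_abs, hθ, mul_one, Real.norm_eq_abs] at this
  have h2 : |r * (inner ℝ θ (gradient f x) : ℝ)| ≤ |r| * M₁ := by
    rw [abs_mul]
    refine mul_le_mul_of_nonneg_left ?_ (abs_nonneg r)
    calc |(inner ℝ θ (gradient f x) : ℝ)| ≤ ‖θ‖ * ‖gradient f x‖ := abs_real_inner_le_norm _ _
      _ ≤ M₁ := by rw [hθ, one_mul]; exact hM₁ x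
  calc |f (x + r • θ) - f x - r * (inner ℝ θ (gradient f x) : ℝ)|
      ≤ |f (x + r • θ) - f x| + |r * (inner ℝ θ (gradient f x) : ℝ)| := abs_sub _ _
    _ ≤ M₁ * |r| + |r| * M₁ := add_le_add h1 h2
    _ = 2 * M₁ * |r| := by ring

lemma integrableOn_mul_rpow {F : ℝ → ℝ} (hF : Continuous F) {s : Set ℝ} (hs : MeasurableSet s)
    (hs0 : s ⊆ Ioi 0) {p : ℝ} {φ : ℝ → ℝ} (hφ : IntegrableOn φ s)
    (hbd : ∀ r ∈ s, |F r| * r ^ p ≤ φ r) :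
    IntegrableOn (fun r => F r * r ^ p) s := by
  refine Integrable.mono' hφ ?_ ?_
  · exact (hF.continuousOn.mul (fun r hr =>
      (Real.continuousAt_rpow_const r p (Or.inl (ne_of_gt (hs0 hr)))).continuousWithinAt)).aestronglyMeasurable hs
  · rw [ae_restrict_iff' hs]
    refine ae_of_all _ fun r hr => ?_
    rw [Real.norm_eq_abs, abs_mul, abs_of_nonneg (Real.rpow_nonneg (le_of_lt (hs0 hr)) p)]
    exact hbd r hr


lemma dCoef_pos {α : ℝ} (h1 : 1 < α) (h2 : α < 2) : 0 < dCoef α := by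
  have hΓ2 : 0 < Real.Gamma (2 - α) := Real.Gamma_pos_of_pos (by linarith)
  have hne : (1 : ℝ) - α ≠ 0 := by intro h; rw [sub_eq_zero] at h; linarith
  have hΓeq : Real.Gamma (2 - α) = (1 - α) * Real.Gamma (1 - α) := by
    have h := Real.Gamma_add_one hne
    rw [show (1 : ℝ) - α + 1 = 2 - α by ring] at h
    exact h
  have hΓ : Real.Gamma (1 - α) < 0 := by nlinarith
  have hcos : Real.cos (π * α / 2) < 0 := by
    refine Real.cos_neg_of_pi_div_two_lt_of_lt ?_ ?_
    · have := Real.pi_pos; nlinarith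
    · have := Real.pi_pos; nlinarith
  exact div_pos (by linarith) (mul_pos_of_neg_of_neg hΓ hcos)

/-- The inner ℝ θ-integral. -/
def Gfun {d : ℕ} (ν : Measure (Ed d)) (f : Ed d → ℝ) (z : Ed d) (r : ℝ) : ℝ :=
  ∫ θ, (f (z + r • θ) - f z - r * (inner ℝ θ (gradient f z) : ℝ)) ∂ν

lemma Lop_eq {d : ℕ} (α dα : ℝ) (ν : Measure (Ed d)) (f : Ed d → ℝ) (z : Ed d) :
    Lop d α dα ν f z = dα * ∫ r in Ioi (0:ℝ), Gfun ν f z r * r ^ (-1 - α) := rfl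

/-- For `f ∈ C²(ℝ^d)` with bounded gradient and Hessian,
`|L^α f(x) - L^α f(y)| ≤ (2 d_α ‖∇²f‖_∞ / (α(2-α)(α-1))) |x-y|^{2-α}`. -/
theorem Lop_holder_estimate
    (d : ℕ) (hd : 2 ≤ d) (α : ℝ) (hα : 1 < α ∧ α < 2)
    (ν : Measure (Ed d)) (hνprob : IsProbabilityMeasure ν)
    (hνsph : ν {θ : Ed d | ‖θ‖ ≠ 1} = 0)
    (f : Ed d → ℝ) (hf : ContDiff ℝ 2 f)
    (M₁ M₂ : ℝ) (hM₁ : ∀ x : Ed d, ‖gradient f x‖ ≤ M₁)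
    (hM₂ : ∀ x : Ed d, ‖fderiv ℝ (gradient f) x‖ ≤ M₂) :
    ∀ x y : Ed d,
      |Lop d α (dCoef α) ν f x - Lop d α (dCoef α) ν f y| ≤
        2 * dCoef α * M₂ / (α * (2 - α) * (α - 1)) * ‖x - y‖ ^ (2 - α) := by
  intro x y
  obtain ⟨hα1, hα2⟩ := hα
  have hα0 : (0:ℝ) < α := by linarith
  have hM₂0 : 0 ≤ M₂ := le_trans (norm_nonneg _) (hM₂ 0)
  have hM₁0 : 0 ≤ M₁ := le_trans (norm_nonneg _) (hM₁ 0)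
  have hdpos : 0 < dCoef α := dCoef_pos hα1 hα2
  by_cases hxy : x = y
  · subst hxy
    simp [Real.zero_rpow (show (2:ℝ) - α ≠ 0 by intro hc; rw [sub_eq_zero] at hc; linarith)]
  have hh0 : 0 < ‖x - y‖ := norm_pos_iff.2 (sub_ne_zero.2 hxy)
  set h := ‖x - y‖ with hhdef
  -- a.e. the sphere condition
  have haeθ : ∀ᵐ θ ∂ν, ‖θ‖ = 1 := by
    rw [ae_iff]; exact hνsph
  -- continuity of the integrand in θ and in r
  have hgcontθ : ∀ (z : Ed d) (r : ℝ), Continuous fun θ : Ed d =>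
      f (z + r • θ) - f z - r * (inner ℝ θ (gradient f z) : ℝ) := by
    intro z r
    exact ((hf.continuous.comp (continuous_const.add (continuous_id.const_smul r))).sub
      continuous_const).sub (continuous_const.mul (continuous_id.inner continuous_const))
  have hgcontr : ∀ (z θ : Ed d), Continuous fun r : ℝ =>
      f (z + r • θ) - f z - r * (inner ℝ θ (gradient f z) : ℝ) := by
    intro z θ
    exact ((hf.continuous.comp (continuous_const.add (continuous_id.smul continuous_const))).sub
      continuous_const).sub (continuous_id.mul continuous_const)
  -- θ-integrability
  have hgint : ∀ (z : Ed d) (r : ℝ), Integrable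
      (fun θ : Ed d => f (z + r • θ) - f z - r * (inner ℝ θ (gradient f z) : ℝ)) ν := by
    intro z r
    refine Integrable.mono' (integrable_const (2 * M₁ * |r|))
      ((hgcontθ z r).aestronglyMeasurable) ?_
    filter_upwards [haeθ] with θ hθ
    exact lin_bound hf hM₁ z θ hθ r
  -- continuity of G
  have hGcont : ∀ z : Ed d, Continuous (Gfun ν f z) := by
    intro z
    rw [continuous_iff_continuousAt]
    intro r₀
    refine continuousAt_of_dominated (bound := fun _ => 2 * M₁ * (|r₀| + 1))
      (Eventually.of_forall fun r => (hgcontθ z r).aestronglyMeasurable) ?_ (integrable_const _)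
      (Eventually.of_forall fun θ => (hgcontr z θ).continuousAt)
    have hev : ∀ᶠ r in 𝓝 r₀, |r| ≤ |r₀| + 1 := by
      filter_upwards [Metric.ball_mem_nhds r₀ one_pos] with r hr
      have h1 : |r - r₀| < 1 := by rwa [mem_ball, Real.dist_eq] at hr
      have h2 : |r| - |r₀| ≤ |r - r₀| := abs_sub_abs_le_abs_sub r r₀
      linarith
    filter_upwards [hev] with r hr
    filter_upwards [haeθ] with θ hθ
    calc ‖f (z + r • θ) - f z - r * (inner ℝ θ (gradient f z) : ℝ)‖
        ≤ 2 * M₁ * |r| := lin_bound hf hM₁ z θ hθ r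
      _ ≤ 2 * M₁ * (|r₀| + 1) := by nlinarith
  -- difference of G's as one integral
  have hGsub : ∀ r : ℝ, Gfun ν f x r - Gfun ν f y r =
      ∫ θ, ((f (x + r • θ) - f x - r * (inner ℝ θ (gradient f x) : ℝ))
        - (f (y + r • θ) - f y - r * (inner ℝ θ (gradient f y) : ℝ))) ∂ν :=
    fun r => (integral_sub (hgint x r) (hgint y r)).symm
  -- generic bound for |∫|
  have habsint : ∀ (F : Ed d → ℝ) (C : ℝ), Integrable F ν → (∀ᵐ θ ∂ν, |F θ| ≤ C) →
      |∫ θ, F θ ∂ν| ≤ C := by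
    intro F C hFi hC
    have := norm_integral_le_of_norm_le_const (μ := ν) (f := F) (C := C) hC
    simpa using this
  -- pointwise bounds on G differences
  have hbd1 : ∀ r : ℝ, 0 ≤ r → |Gfun ν f x r - Gfun ν f y r| ≤ M₂ * r ^ 2 := by
    intro r hr
    rw [hGsub r]
    refine habsint _ _ ((hgint x r).sub (hgint y r)) ?_
    filter_upwards [haeθ] with θ hθ
    calc |(f (x + r • θ) - f x - r * (inner ℝ θ (gradient f x) : ℝ))
          - (f (y + r • θ) - f y - r * (inner ℝ θ (gradient f y) : ℝ))|
        ≤ |f (x + r • θ) - f x - r * (inner ℝ θ (gradient f x) : ℝ)|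
          + |f (y + r • θ) - f y - r * (inner ℝ θ (gradient f y) : ℝ)| := abs_sub _ _
      _ ≤ M₂ * r ^ 2 / 2 + M₂ * r ^ 2 / 2 :=
          add_le_add (taylor_bound hf hM₂ x θ hθ hr) (taylor_bound hf hM₂ y θ hθ hr)
      _ = M₂ * r ^ 2 := by ring
  have hbd2 : ∀ r : ℝ, h ≤ r → |Gfun ν f x r - Gfun ν f y r| ≤ M₂ * (2 * h * r - h ^ 2) := by
    intro r hr
    rw [hGsub r]
    refine habsint _ _ ((hgint x r).sub (hgint y r)) ?_
    filter_upwards [haeθ] with θ hθ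
    exact tail_bound hf hM₂ x y θ hθ hr
  -- size bounds on G itself
  have hGlin : ∀ (z : Ed d) (r : ℝ), |Gfun ν f z r| ≤ 2 * M₁ * |r| := by
    intro z r
    refine habsint _ _ (hgint z r) ?_
    filter_upwards [haeθ] with θ hθ
    exact lin_bound hf hM₁ z θ hθ r
  have hGquad : ∀ (z : Ed d) (r : ℝ), 0 ≤ r → |Gfun ν f z r| ≤ M₂ * r ^ 2 / 2 := by
    intro z r hr
    refine habsint _ _ (hgint z r) ?_
    filter_upwards [haeθ] with θ hθ
    exact taylor_bound hf hM₂ z θ hθ hr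
  -- rpow helpers
  have hrpadd : ∀ r : ℝ, 0 < r → ∀ a b : ℝ, r ^ a * r ^ b = r ^ (a + b) :=
    fun r hr a b => (Real.rpow_add hr a b).symm
  have hrp2 : ∀ r : ℝ, 0 < r → (r : ℝ) ^ (2:ℕ) = r ^ (2:ℝ) := by
    intro r hr
    rw [← Real.rpow_natCast r 2]
    norm_num
  -- integrability of the full r-integrand
  have hIntOn1 : ∀ z : Ed d, IntegrableOn (fun r => Gfun ν f z r * r ^ (-1 - α)) (Ioc 0 1) volume := by
    intro z
    refine integrableOn_mul_rpow (hGcont z) measurableSet_Ioc Ioc_subset_Ioi_self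
      (φ := fun r => M₂ / 2 * r ^ (1 - α)) ?_ ?_
    · have h1 := intervalIntegral.intervalIntegrable_rpow' (a := 0) (b := 1)
        (show (-1:ℝ) < 1 - α by linarith)
      exact ((intervalIntegrable_iff_integrableOn_Ioc_of_le zero_le_one).mp h1).const_mul _
    · intro r hr
      have hr0 : 0 < r := hr.1
      calc |Gfun ν f z r| * r ^ (-1 - α)
          ≤ M₂ * r ^ 2 / 2 * r ^ (-1 - α) :=
            mul_le_mul_of_nonneg_right (hGquad z r hr0.le) (Real.rpow_nonneg hr0.le _)
        _ = M₂ / 2 * (r ^ (2:ℝ) * r ^ (-1 - α)) := by rw [← hrp2 r hr0]; ring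
        _ = M₂ / 2 * r ^ (1 - α) := by
            rw [hrpadd r hr0, show (2:ℝ) + (-1 - α) = 1 - α by ring]
  have hIntOn2 : ∀ z : Ed d, IntegrableOn (fun r => Gfun ν f z r * r ^ (-1 - α)) (Ioi 1) volume := by
    intro z
    refine integrableOn_mul_rpow (hGcont z) measurableSet_Ioi (Ioi_subset_Ioi zero_le_one)
      (φ := fun r => 2 * M₁ * r ^ (-α)) ?_ ?_
    · exact (integrableOn_Ioi_rpow_of_lt (show -α < -1 by linarith) zero_lt_one).const_mul _
    · intro r hr
      have hr1 : (1:ℝ) < r := hr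
      have hr0 : 0 < r := lt_trans zero_lt_one hr1
      calc |Gfun ν f z r| * r ^ (-1 - α)
          ≤ 2 * M₁ * |r| * r ^ (-1 - α) :=
            mul_le_mul_of_nonneg_right (hGlin z r) (Real.rpow_nonneg hr0.le _)
        _ = 2 * M₁ * (r ^ (1:ℝ) * r ^ (-1 - α)) := by
            rw [abs_of_pos hr0, Real.rpow_one]; ring
        _ = 2 * M₁ * r ^ (-α) := by rw [hrpadd r hr0, show (1:ℝ) + (-1 - α) = -α by ring]
  have hIntFull : ∀ z : Ed d, IntegrableOn (fun r => Gfun ν f z r * r ^ (-1 - α)) (Ioi 0) volume := by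
    intro z
    rw [← Ioc_union_Ioi_eq_Ioi (zero_le_one (α := ℝ))]
    exact (hIntOn1 z).union (hIntOn2 z)
  -- difference as single integral
  have hsubeq : (fun r : ℝ => (Gfun ν f x r - Gfun ν f y r) * r ^ (-1 - α)) =
      fun r : ℝ => Gfun ν f x r * r ^ (-1 - α) - Gfun ν f y r * r ^ (-1 - α) := by
    funext r; ring
  have hsubint : IntegrableOn (fun r : ℝ => (Gfun ν f x r - Gfun ν f y r) * r ^ (-1 - α))
      (Ioi 0) volume := by
    rw [hsubeq]; exact (hIntFull x).sub (hIntFull y)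
  have key : Lop d α (dCoef α) ν f x - Lop d α (dCoef α) ν f y =
      dCoef α * ∫ r in Ioi (0:ℝ), (Gfun ν f x r - Gfun ν f y r) * r ^ (-1 - α) := by
    rw [Lop_eq, Lop_eq, ← mul_sub]
    congr 1
    rw [← integral_sub (hIntFull x) (hIntFull y), hsubeq]
  have step1 : |Lop d α (dCoef α) ν f x - Lop d α (dCoef α) ν f y| ≤
      dCoef α * ∫ r in Ioi (0:ℝ), ‖(Gfun ν f x r - Gfun ν f y r) * r ^ (-1 - α)‖ := by
    rw [key, abs_mul, abs_of_pos hdpos]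
    exact mul_le_mul_of_nonneg_left (norm_integral_le_integral_norm
      (μ := volume.restrict (Ioi (0:ℝ))) fun r => (Gfun ν f x r - Gfun ν f y r) * r ^ (-1 - α))
      hdpos.le
  have hsplit : (∫ r in Ioi (0:ℝ), ‖(Gfun ν f x r - Gfun ν f y r) * r ^ (-1 - α)‖) =
      (∫ r in Ioc (0:ℝ) h, ‖(Gfun ν f x r - Gfun ν f y r) * r ^ (-1 - α)‖) +
        ∫ r in Ioi h, ‖(Gfun ν f x r - Gfun ν f y r) * r ^ (-1 - α)‖ := by
    rw [← Ioc_union_Ioi_eq_Ioi hh0.le]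
    exact setIntegral_union (Ioc_disjoint_Ioi le_rfl) measurableSet_Ioi
      ((hsubint.mono_set Ioc_subset_Ioi_self).norm)
      ((hsubint.mono_set (Ioi_subset_Ioi hh0.le)).norm)
  -- denominators
  have hne1 : (2:ℝ) - α ≠ 0 := by intro hc; rw [sub_eq_zero] at hc; linarith
  have hne2 : α - 1 ≠ 0 := by intro hc; rw [sub_eq_zero] at hc; linarith
  have hne3 : α ≠ 0 := ne_of_gt hα0
  have hne4 : (1:ℝ) - α ≠ 0 := by intro hc; rw [sub_eq_zero] at hc; linarith
  -- first piece
  have hφ1int : IntegrableOn (fun r : ℝ => M₂ * r ^ (1 - α)) (Ioc 0 h) volume := by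
    have h1 := intervalIntegral.intervalIntegrable_rpow' (a := 0) (b := h)
      (show (-1:ℝ) < 1 - α by linarith)
    exact ((intervalIntegrable_iff_integrableOn_Ioc_of_le hh0.le).mp h1).const_mul _
  have hptw1 : ∀ r ∈ Ioc (0:ℝ) h,
      ‖(Gfun ν f x r - Gfun ν f y r) * r ^ (-1 - α)‖ ≤ M₂ * r ^ (1 - α) := by
    intro r hr
    have hr0 : 0 < r := hr.1
    rw [Real.norm_eq_abs, abs_mul, abs_of_nonneg (Real.rpow_nonneg hr0.le _)]
    calc |Gfun ν f x r - Gfun ν f y r| * r ^ (-1 - α)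
        ≤ M₂ * r ^ 2 * r ^ (-1 - α) :=
          mul_le_mul_of_nonneg_right (hbd1 r hr0.le) (Real.rpow_nonneg hr0.le _)
      _ = M₂ * (r ^ (2:ℝ) * r ^ (-1 - α)) := by rw [← hrp2 r hr0]; ring
      _ = M₂ * r ^ (1 - α) := by
          rw [hrpadd r hr0, show (2:ℝ) + (-1 - α) = 1 - α by ring]
  have hE1 : (∫ r in Ioc (0:ℝ) h, ‖(Gfun ν f x r - Gfun ν f y r) * r ^ (-1 - α)‖)
      ≤ M₂ * (h ^ (2 - α) / (2 - α)) := by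
    refine le_trans (setIntegral_mono_on ((hsubint.mono_set Ioc_subset_Ioi_self).norm)
      hφ1int measurableSet_Ioc hptw1) (le_of_eq ?_)
    rw [integral_const_mul]
    congr 1
    rw [← intervalIntegral.integral_of_le hh0.le,
      integral_rpow (Or.inl (show (-1:ℝ) < 1 - α by linarith)),
      show (1:ℝ) - α + 1 = 2 - α by ring, Real.zero_rpow hne1]
    ring
  -- second piece
  have hi2a : IntegrableOn (fun r : ℝ => r ^ (-α)) (Ioi h) volume :=
    integrableOn_Ioi_rpow_of_lt (by linarith) hh0
  have hi2b : IntegrableOn (fun r : ℝ => r ^ (-1 - α)) (Ioi h) volume :=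
    integrableOn_Ioi_rpow_of_lt (by linarith) hh0
  have hφ2int : IntegrableOn
      (fun r : ℝ => 2 * M₂ * h * r ^ (-α) - M₂ * (h * h) * r ^ (-1 - α)) (Ioi h) volume :=
    (hi2a.const_mul _).sub (hi2b.const_mul _)
  have hptw2 : ∀ r ∈ Ioi h,
      ‖(Gfun ν f x r - Gfun ν f y r) * r ^ (-1 - α)‖ ≤
        2 * M₂ * h * r ^ (-α) - M₂ * (h * h) * r ^ (-1 - α) := by
    intro r hr
    have hr1 : h < r := hr
    have hr0 : 0 < r := lt_trans hh0 hr1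
    rw [Real.norm_eq_abs, abs_mul, abs_of_nonneg (Real.rpow_nonneg hr0.le _)]
    calc |Gfun ν f x r - Gfun ν f y r| * r ^ (-1 - α)
        ≤ M₂ * (2 * h * r - h ^ 2) * r ^ (-1 - α) :=
          mul_le_mul_of_nonneg_right (hbd2 r hr1.le) (Real.rpow_nonneg hr0.le _)
      _ = 2 * M₂ * h * (r ^ (1:ℝ) * r ^ (-1 - α)) - M₂ * (h * h) * r ^ (-1 - α) := by
          rw [Real.rpow_one]; ring
      _ = 2 * M₂ * h * r ^ (-α) - M₂ * (h * h) * r ^ (-1 - α) := by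
          rw [hrpadd r hr0, show (1:ℝ) + (-1 - α) = -α by ring]
  have hE2 : (∫ r in Ioi h, ‖(Gfun ν f x r - Gfun ν f y r) * r ^ (-1 - α)‖)
      ≤ 2 * M₂ * h * (h ^ (1 - α) / (α - 1)) - M₂ * (h * h) * (h ^ (-α) / α) := by
    refine le_trans (setIntegral_mono_on ((hsubint.mono_set (Ioi_subset_Ioi hh0.le)).norm)
      hφ2int measurableSet_Ioi hptw2) (le_of_eq ?_)
    rw [integral_sub (hi2a.const_mul _) (hi2b.const_mul _),
      integral_const_mul, integral_const_mul,
      integral_Ioi_rpow_of_lt (show -α < -1 by linarith) hh0,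
      integral_Ioi_rpow_of_lt (show -1 - α < -1 by linarith) hh0,
      show -α + 1 = 1 - α by ring, show -1 - α + 1 = -α by ring]
    field_simp
    ring
  -- final algebra
  have e1 : h * h ^ (1 - α) = h ^ (2 - α) := by
    have e := (Real.rpow_add hh0 1 (1 - α)).symm
    rw [Real.rpow_one] at e
    rw [e, show (1:ℝ) + (1 - α) = 2 - α by ring]
  have e2 : h * h * h ^ (-α) = h ^ (2 - α) := by
    have e := (Real.rpow_add hh0 1 (-α)).symm
    rw [Real.rpow_one] at e
    rw [mul_assoc, e, show (1:ℝ) + -α = 1 - α by ring, e1]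
  have hfinal : dCoef α * (M₂ * (h ^ (2 - α) / (2 - α)) +
      (2 * M₂ * h * (h ^ (1 - α) / (α - 1)) - M₂ * (h * h) * (h ^ (-α) / α)))
      = 2 * dCoef α * M₂ / (α * (2 - α) * (α - 1)) * h ^ (2 - α) := by
    rw [show 2 * M₂ * h * (h ^ (1 - α) / (α - 1)) = 2 * M₂ * (h * h ^ (1 - α)) / (α - 1) by ring,
      e1, show M₂ * (h * h) * (h ^ (-α) / α) = M₂ * (h * h * h ^ (-α)) / α by ring, e2]
    field_simp
    ring
  calc |Lop d α (dCoef α) ν f x - Lop d α (dCoef α) ν f y|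
      ≤ dCoef α * ∫ r in Ioi (0:ℝ), ‖(Gfun ν f x r - Gfun ν f y r) * r ^ (-1 - α)‖ := step1
    _ = dCoef α * ((∫ r in Ioc (0:ℝ) h, ‖(Gfun ν f x r - Gfun ν f y r) * r ^ (-1 - α)‖) +
        ∫ r in Ioi h, ‖(Gfun ν f x r - Gfun ν f y r) * r ^ (-1 - α)‖) := by rw [hsplit]
    _ ≤ dCoef α * (M₂ * (h ^ (2 - α) / (2 - α)) +
        (2 * M₂ * h * (h ^ (1 - α) / (α - 1)) - M₂ * (h * h) * (h ^ (-α) / α))) :=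
        mul_le_mul_of_nonneg_left (add_le_add hE1 hE2) hdpos.le
    _ = 2 * dCoef α * M₂ / (α * (2 - α) * (α - 1)) * h ^ (2 - α) := hfinal
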